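/- Suppose ∇f is L₁-Lipschitz on E with L₁ > 0, let θ ∈ (0,1/2) and ζ ∈ (θ,1/2), suppose H satisfies ⟨H u, u⟩ ≥ μ·‖u‖² for all u ∈ E with μ > 0, and let x̂ ∈ E satisfy q(x̂) − q(x⁰) ≤ ζ·(ℓ(x̂) − ℓ(x⁰)); set d = x̂ − x⁰. Then for every α ∈ (0,1] with α < (1−θ)·μ/((1−ζ)·L₁), the descent condition F(x⁰) − F(x⁰ + α·d) ≥ θ·(ℓ(x⁰) − ℓ(x⁰ + α·d)) holds. Consequently, for any β ∈ (0,1) there exists a smallest nonnegative integer i such that α = β^i satisfies the descent condition, and this step size satisfies β^i ≥ min{1, β·(1−θ)·μ/((1−ζ)·L₁)}. -/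

import Mathlib

open scoped RealInnerProductSpace

abbrev E (n : ℕ) := EuclideanSpace ℝ (Fin n)

lemma descent_lemma {n : ℕ} (f : E n → ℝ) (f' : E n → E n)
    (hgrad : ∀ x, HasGradientAt f (f' x) x) (L : ℝ) (hL : 0 ≤ L)
    (hlip : ∀ y z, ‖f' y - f' z‖ ≤ L * ‖y - z‖) (x p : E n) :
    f (x + p) ≤ f x + ⟪f' x, p⟫ + L / 2 * ‖p‖ ^ 2 := by
  have hf'cont : Continuous f' := by
    have : LipschitzWith (Real.toNNReal L) f' := by
      rw [lipschitzWith_iff_dist_le_mul]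
      intro y z
      rw [dist_eq_norm, dist_eq_norm, Real.coe_toNNReal L hL]
      exact hlip y z
    exact this.continuous
  have hline : Continuous fun t : ℝ => x + t • p := by continuity
  have hderiv : ∀ t : ℝ, HasDerivAt (fun t : ℝ => f (x + t • p)) ⟪f' (x + t • p), p⟫ t := by
    intro t
    have h1 : HasDerivAt (fun t : ℝ => x + t • p) p t := by
      simpa using ((hasDerivAt_id t).smul_const p).const_add x
    have h2 := (hgrad (x + t • p)).hasFDerivAt.comp_hasDerivAt t h1
    exact h2
  have hcont : Continuous fun t : ℝ => ⟪f' (x + t • p), p⟫ :=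
    ((hf'cont.comp hline).inner continuous_const)
  have hint1 : IntervalIntegrable (fun t : ℝ => ⟪f' (x + t • p), p⟫) MeasureTheory.volume 0 1 :=
    hcont.intervalIntegrable 0 1
  have hftc : (∫ t in (0:ℝ)..1, ⟪f' (x + t • p), p⟫) = f (x + p) - f x := by
    have := intervalIntegral.integral_eq_sub_of_hasDerivAt
      (f := fun t : ℝ => f (x + t • p)) (fun t _ => hderiv t) hint1
    simpa using this
  have hint2 : IntervalIntegrable (fun t : ℝ => ⟪f' x, p⟫ + L * ‖p‖ ^ 2 * t)
      MeasureTheory.volume 0 1 :=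
    (continuous_const.add (continuous_const.mul continuous_id)).intervalIntegrable 0 1
  have hmono : (∫ t in (0:ℝ)..1, ⟪f' (x + t • p), p⟫)
      ≤ ∫ t in (0:ℝ)..1, (⟪f' x, p⟫ + L * ‖p‖ ^ 2 * t) := by
    apply intervalIntegral.integral_mono_on (by norm_num) hint1 hint2
    intro t ht
    have h1 : ⟪f' (x + t • p) - f' x, p⟫ ≤ ‖f' (x + t • p) - f' x‖ * ‖p‖ :=
      real_inner_le_norm _ _
    have h2 : ‖f' (x + t • p) - f' x‖ ≤ L * (t * ‖p‖) := by
      have := hlip (x + t • p) x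
      simpa [norm_smul, abs_of_nonneg ht.1] using this
    have h3 : ⟪f' (x + t • p), p⟫ - ⟪f' x, p⟫ = ⟪f' (x + t • p) - f' x, p⟫ := by
      rw [inner_sub_left]
    nlinarith [norm_nonneg p, mul_le_mul_of_nonneg_right h2 (norm_nonneg p)]
  have hval : (∫ t in (0:ℝ)..1, (⟪f' x, p⟫ + L * ‖p‖ ^ 2 * t))
      = ⟪f' x, p⟫ + L * ‖p‖ ^ 2 / 2 := by
    rw [intervalIntegral.integral_add (f := fun _ => ⟪f' x, p⟫) (g := fun t => L * ‖p‖ ^ 2 * t) ((continuous_const).intervalIntegrable 0 1)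
      (((continuous_const.mul continuous_id : Continuous fun t : ℝ => L * ‖p‖ ^ 2 * t).intervalIntegrable 0 1)),
      intervalIntegral.integral_const_mul, integral_id, intervalIntegral.integral_const, smul_eq_mul]
    ring
  rw [hftc, hval] at hmono
  linarith
/-- Under the L₁-Lipschitz gradient assumption, with `θ ∈ (0,1/2)`,
`ζ ∈ (θ,1/2)`, `⟨Hu,u⟩ ≥ μ‖u‖²` (`μ > 0`), and `x̂` satisfying the inexactness
condition `q(x̂) − q(x⁰) ≤ ζ(ℓ(x̂) − ℓ(x⁰))`, the descent condition
`F(x⁰) − F(x⁰ + αd) ≥ θ(ℓ(x⁰) − ℓ(x⁰ + αd))` holds for all `α ∈ (0,1]` with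
`α < (1−θ)μ/((1−ζ)L₁)`; consequently, for any `β ∈ (0,1)` there is a smallest
`i ∈ ℕ` such that `α = βⁱ` satisfies the descent condition, and
`βⁱ ≥ min{1, β(1−θ)μ/((1−ζ)L₁)}`. -/
theorem stmt4 {n : ℕ} (f g : E n → ℝ) (f' : E n → E n)
    (hfconv : ConvexOn ℝ Set.univ f) (hfC2 : ContDiff ℝ 2 f)
    (hgrad : ∀ x, HasGradientAt f (f' x) x)
    (hgconv : ConvexOn ℝ Set.univ g) (hgcont : Continuous g)
    (F : E n → ℝ) (hF : ∀ y, F y = f y + g y)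
    (L₁ : ℝ) (hL₁ : 0 < L₁) (hlip : ∀ y z, ‖f' y - f' z‖ ≤ L₁ * ‖y - z‖)
    (θ ζ : ℝ) (hθ : θ ∈ Set.Ioo (0:ℝ) (1/2)) (hζ : ζ ∈ Set.Ioo θ (1/2))
    (x₀ : E n) (H : E n →L[ℝ] E n)
    (hsa : ∀ u w, ⟪H u, w⟫ = ⟪u, H w⟫)
    (μ : ℝ) (hμ : 0 < μ) (hlb : ∀ u, μ * ‖u‖ ^ 2 ≤ ⟪H u, u⟫)
    (ℓ q : E n → ℝ)
    (hℓ : ∀ y, ℓ y = f x₀ + ⟪f' x₀, y - x₀⟫ + g y)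
    (hq : ∀ y, q y = ℓ y + (1/2) * ⟪H (y - x₀), y - x₀⟫)
    (xh : E n) (hxh : q xh - q x₀ ≤ ζ * (ℓ xh - ℓ x₀))
    (d : E n) (hd : d = xh - x₀) :
    (∀ α : ℝ, 0 < α → α ≤ 1 → α < (1 - θ) * μ / ((1 - ζ) * L₁) →
        F x₀ - F (x₀ + α • d) ≥ θ * (ℓ x₀ - ℓ (x₀ + α • d))) ∧
      ∀ β : ℝ, 0 < β → β < 1 →
        ∃ i : ℕ,
          (F x₀ - F (x₀ + β ^ i • d) ≥ θ * (ℓ x₀ - ℓ (x₀ + β ^ i • d))) ∧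
          (∀ j : ℕ, j < i →
            ¬ (F x₀ - F (x₀ + β ^ j • d) ≥ θ * (ℓ x₀ - ℓ (x₀ + β ^ j • d)))) ∧
          β ^ i ≥ min 1 (β * (1 - θ) * μ / ((1 - ζ) * L₁)) := by
  classical
  obtain ⟨hθ0, hθ2⟩ := hθ
  obtain ⟨hζθ, hζ2⟩ := hζ
  have hθ1 : (0:ℝ) < 1 - θ := by linarith
  have hζ1 : (0:ℝ) < 1 - ζ := by linarith
  have hc : 0 < (1 - θ) * μ / ((1 - ζ) * L₁) :=
    div_pos (mul_pos hθ1 hμ) (mul_pos hζ1 hL₁)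
  -- inexactness consequence
  have hq0 : q x₀ = ℓ x₀ := by rw [hq]; simp
  have hqh : q xh = ℓ xh + (1/2) * ⟪H d, d⟫ := by rw [hq, hd]
  have hΔ : μ * ‖d‖ ^ 2 / 2 ≤ (1 - ζ) * (ℓ x₀ - ℓ xh) := by
    have h1 := hxh
    rw [hq0, hqh] at h1
    have h2 := hlb d
    linarith
  have e2 : ℓ x₀ = f x₀ + g x₀ := by rw [hℓ]; simp
  have e3 : ℓ xh = f x₀ + ⟪f' x₀, d⟫ + g xh := by rw [hℓ, ← hd]
  have part1 : ∀ α : ℝ, 0 < α → α ≤ 1 → α < (1 - θ) * μ / ((1 - ζ) * L₁) →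
      F x₀ - F (x₀ + α • d) ≥ θ * (ℓ x₀ - ℓ (x₀ + α • d)) := by
    intro α hα0 hα1 hαc
    have hD : α * ((1 - ζ) * L₁) < (1 - θ) * μ :=
      (lt_div_iff₀ (mul_pos hζ1 hL₁)).mp hαc
    have e1 : ℓ (x₀ + α • d) = f x₀ + α * ⟪f' x₀, d⟫ + g (x₀ + α • d) := by
      rw [hℓ]
      have h : x₀ + α • d - x₀ = α • d := by abel
      rw [h, real_inner_smul_right]
    have hA : f (x₀ + α • d) ≤ f x₀ + α * ⟪f' x₀, d⟫ + L₁ / 2 * (α ^ 2 * ‖d‖ ^ 2) := by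
      have := descent_lemma f f' hgrad L₁ hL₁.le hlip x₀ (α • d)
      rw [real_inner_smul_right] at this
      have hn : ‖α • d‖ ^ 2 = α ^ 2 * ‖d‖ ^ 2 := by
        rw [norm_smul, mul_pow]; simp [abs_of_pos hα0, sq_abs]
      rw [hn] at this
      linarith
    have hy : x₀ + α • d = (1 - α) • x₀ + α • xh := by rw [hd]; module
    have hgy : g (x₀ + α • d) ≤ (1 - α) * g x₀ + α * g xh := by
      rw [hy]
      exact hgconv.2 (Set.mem_univ _) (Set.mem_univ _) (by linarith) hα0.le (by ring)
    have hB : ℓ (x₀ + α • d) ≤ (1 - α) * ℓ x₀ + α * ℓ xh := by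
      rw [e1, e2, e3]; linarith [hgy]
    have hB' : (1 - θ) * ℓ (x₀ + α • d) ≤ (1 - θ) * ((1 - α) * ℓ x₀ + α * ℓ xh) :=
      mul_le_mul_of_nonneg_left hB hθ1.le
    rw [e1, e2, e3] at hB'
    have key : L₁ / 2 * (α ^ 2 * ‖d‖ ^ 2) ≤ (1 - θ) * (α * (ℓ x₀ - ℓ xh)) := by
      have h1 : α * (μ * ‖d‖ ^ 2 / 2) ≤ α * ((1 - ζ) * (ℓ x₀ - ℓ xh)) :=
        mul_le_mul_of_nonneg_left hΔ hα0.le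
      have h1' : (1 - θ) * (α * (μ * ‖d‖ ^ 2 / 2)) ≤
          (1 - θ) * (α * ((1 - ζ) * (ℓ x₀ - ℓ xh))) :=
        mul_le_mul_of_nonneg_left h1 hθ1.le
      have h2 : α * ((1 - ζ) * L₁) * (α * ‖d‖ ^ 2 / 2) ≤
          (1 - θ) * μ * (α * ‖d‖ ^ 2 / 2) :=
        mul_le_mul_of_nonneg_right hD.le (by positivity)
      have h4 : (1 - ζ) * (L₁ / 2 * (α ^ 2 * ‖d‖ ^ 2)) ≤
          (1 - ζ) * ((1 - θ) * (α * (ℓ x₀ - ℓ xh))) := by linarith [h1', h2]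
      exact (mul_le_mul_iff_right₀ hζ1).mp h4
    rw [e2, e3] at key
    rw [hF, hF, ge_iff_le, e1, e2]
    linarith [hA, hB', key]
  refine ⟨part1, ?_⟩
  intro β hβ0 hβ1
  have hex : ∃ i : ℕ, F x₀ - F (x₀ + β ^ i • d) ≥ θ * (ℓ x₀ - ℓ (x₀ + β ^ i • d)) := by
    obtain ⟨i, hi⟩ := exists_pow_lt_of_lt_one hc hβ1
    exact ⟨i, part1 (β ^ i) (pow_pos hβ0 i) (pow_le_one₀ hβ0.le hβ1.le) hi⟩
  refine ⟨Nat.find hex, Nat.find_spec hex, fun j hj => Nat.find_min hex hj, ?_⟩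
  by_cases hk : Nat.find hex = 0
  · rw [hk]
    simpa using min_le_left 1 (β * (1 - θ) * μ / ((1 - ζ) * L₁))
  · obtain ⟨m, hm⟩ := Nat.exists_eq_succ_of_ne_zero hk
    have hnot := Nat.find_min hex (by omega : m < Nat.find hex)
    have hge : (1 - θ) * μ / ((1 - ζ) * L₁) ≤ β ^ m := by
      by_contra hlt
      push_neg at hlt
      exact hnot (part1 (β ^ m) (pow_pos hβ0 m) (pow_le_one₀ hβ0.le hβ1.le) hlt)
    have h1 : β * ((1 - θ) * μ / ((1 - ζ) * L₁)) ≤ β * β ^ m :=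
      mul_le_mul_of_nonneg_left hge hβ0.le
    have h2 : β ^ Nat.find hex = β * β ^ m := by rw [hm, pow_succ]; ring
    have h3 : β * (1 - θ) * μ / ((1 - ζ) * L₁) = β * ((1 - θ) * μ / ((1 - ζ) * L₁)) := by
      ring
    rw [h2, ge_iff_le]
    calc min 1 (β * (1 - θ) * μ / ((1 - ζ) * L₁))
        ≤ β * (1 - θ) * μ / ((1 - ζ) * L₁) := min_le_right _ _
      _ = β * ((1 - θ) * μ / ((1 - ζ) * L₁)) := h3
      _ ≤ β * β ^ m := h1
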